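/- Let n = 1, so V : [a,b] → ℝ is a continuous scalar potential. Let (θ₁,θ₂) ⊆ (0,π) or (θ₁,θ₂) ⊆ (π,2π), and let (λ, u) be a C¹ eigenvalue branch on (θ₁,θ₂) with u(θ,·) not identically zero for each θ. Then λ is strictly monotone on (θ₁,θ₂). -/

import Mathlib

open Set

noncomputable section

/-- `u` (with derivatives `u'`, `u''` on `[a,b]`) is a scalar `(λ,θ)`-eigenfunction:
`-u'' + Vu = λu` on `[a,b]` with `θ`-periodic boundary conditions. -/
def IsEig1 (a b : ℝ) (V : ℝ → ℝ) (lam θ : ℝ) (u u' u'' : ℝ → ℂ) : Prop :=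
  (∀ x ∈ Icc a b, HasDerivWithinAt u (u' x) (Icc a b) x) ∧
  (∀ x ∈ Icc a b, HasDerivWithinAt u' (u'' x) (Icc a b) x) ∧
  (∀ x ∈ Icc a b, -u'' x + (V x : ℂ) * u x = (lam : ℂ) * u x) ∧
  u b = Complex.exp (θ * Complex.I) * u a ∧
  u' b = Complex.exp (θ * Complex.I) * u' a

/-- `(lam, u)` (with the indicated partial derivatives) is a scalar C¹ eigenvalue branch
on `(θ₁,θ₂)`. -/
def IsBranch1 (a b : ℝ) (V : ℝ → ℝ) (θ₁ θ₂ : ℝ)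
    (lam lam' : ℝ → ℝ) (u ux uxx uθ uθx : ℝ → ℝ → ℂ) : Prop :=
  (∀ θ ∈ Ioo θ₁ θ₂, HasDerivWithinAt lam (lam' θ) (Ioo θ₁ θ₂) θ) ∧
  (∀ θ ∈ Ioo θ₁ θ₂, IsEig1 a b V (lam θ) θ (u θ) (ux θ) (uxx θ)) ∧
  (∀ θ ∈ Ioo θ₁ θ₂, ∀ x ∈ Icc a b,
      HasDerivWithinAt (fun t => u t x) (uθ θ x) (Ioo θ₁ θ₂) θ) ∧
  (∀ θ ∈ Ioo θ₁ θ₂, ∀ x ∈ Icc a b,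
      HasDerivWithinAt (fun t => ux t x) (uθx θ x) (Ioo θ₁ θ₂) θ) ∧
  ContinuousOn (fun p : ℝ × ℝ => uθ p.1 p.2) (Ioo θ₁ θ₂ ×ˢ Icc a b) ∧
  ContinuousOn (fun p : ℝ × ℝ => uθx p.1 p.2) (Ioo θ₁ θ₂ ×ˢ Icc a b)

open Filter MeasureTheory Complex Topology

section Aux

variable {E : Type*} [NormedAddCommGroup E] [NormedSpace ℝ E]


lemma hdw_Ici {a b x : ℝ} {f : ℝ → E} {f' : E} (hx : x ∈ Ico a b)
    (h : HasDerivWithinAt f f' (Icc a b) x) : HasDerivWithinAt f f' (Ici x) x :=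
  h.mono_of_mem_nhdsWithin (mem_nhdsWithin.2 ⟨Iio b, isOpen_Iio, hx.2,
    fun y hy => ⟨hx.1.trans hy.2, hy.1.le⟩⟩)

lemma hdw_Iic {a b x : ℝ} {f : ℝ → E} {f' : E} (hx : x ∈ Ioc a b)
    (h : HasDerivWithinAt f f' (Icc a b) x) : HasDerivWithinAt f f' (Iic x) x :=
  h.mono_of_mem_nhdsWithin (mem_nhdsWithin.2 ⟨Ioi a, isOpen_Ioi, hx.1,
    fun y hy => ⟨hy.1.le, hy.2.trans hx.2⟩⟩)

lemma hdw_Ioi {a b x : ℝ} {f : ℝ → E} {f' : E} (hx : x ∈ Ioo a b)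
    (h : HasDerivWithinAt f f' (Icc a b) x) : HasDerivWithinAt f f' (Ioi x) x :=
  h.mono_of_mem_nhdsWithin (mem_nhdsWithin.2 ⟨Iio b, isOpen_Iio, hx.2,
    fun y hy => ⟨(hx.1.trans hy.2).le, hy.1.le⟩⟩)

/-- uniqueness for second order linear ODE with zero data -/
lemma ode_zero {a b : ℝ} {c : ℝ → ℂ} {M : ℝ} (hM : ∀ x ∈ Icc a b, ‖c x‖ ≤ M)
    {F F' : ℝ → ℂ} (hF : ∀ x ∈ Icc a b, HasDerivWithinAt F (F' x) (Icc a b) x)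
    (hF' : ∀ x ∈ Icc a b, HasDerivWithinAt F' (c x * F x) (Icc a b) x)
    {x₀ : ℝ} (hx₀ : x₀ ∈ Icc a b) (h0 : F x₀ = 0) (h0' : F' x₀ = 0) :
    ∀ x ∈ Icc a b, F x = 0 ∧ F' x = 0 := by
  have hab : a ≤ b := hx₀.1.trans hx₀.2
  set cc : ℝ → ℂ := fun t => c (max a (min t b)) with hcc
  have hmem : ∀ t : ℝ, max a (min t b) ∈ Icc a b := fun t =>
    ⟨le_max_left _ _, max_le hab (min_le_right _ _)⟩
  have hccM : ∀ t, ‖cc t‖ ≤ max M 1 :=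
    fun t => le_trans (hM _ (hmem t)) (le_max_left _ _)
  have hcc_eq : ∀ t ∈ Icc a b, cc t = c t := by
    intro t ht
    simp only [hcc, min_eq_left ht.2, max_eq_right ht.1]
  set K : NNReal := Real.toNNReal (max M 1) with hK
  have hKval : (K : ℝ) = max M 1 := Real.coe_toNNReal _ (le_max_of_le_right zero_le_one)
  set v : ℝ → ℂ × ℂ → ℂ × ℂ := fun t y => (y.2, cc t * y.1) with hv
  have hlip : ∀ t, LipschitzOnWith K (v t) univ := by
    intro t
    apply LipschitzWith.lipschitzOnWith
    apply LipschitzWith.of_dist_le_mul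
    intro y z
    rw [Prod.dist_eq]
    rw [hKval]
    apply max_le
    · calc dist y.2 z.2 ≤ dist y z := le_max_right _ _
        _ ≤ max M 1 * dist y z := le_mul_of_one_le_left dist_nonneg (le_max_right _ _)
    · have : dist (cc t * y.1) (cc t * z.1) = ‖cc t‖ * dist y.1 z.1 := by
        rw [dist_eq_norm, dist_eq_norm, ← mul_sub, norm_mul]
      rw [this]
      have h1 : dist y.1 z.1 ≤ dist y z := le_max_left _ _
      exact mul_le_mul (hccM t) h1 dist_nonneg (le_trans (norm_nonneg _) (hccM t))
  set d : ℝ → ℂ × ℂ := fun x => (F x, F' x) with hd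
  have hdD : ∀ x ∈ Icc a b, HasDerivWithinAt d (v x (d x)) (Icc a b) x := by
    intro x hx
    have := (hF x hx).prodMk (hF' x hx)
    simpa [hv, hd, hcc_eq x hx] using this
  have hdc : ContinuousOn d (Icc a b) := fun x hx => (hdD x hx).continuousWithinAt
  have hzero : ∀ t : ℝ, v t (0, 0) = (0, 0) := by intro t; simp [hv]
  have hright : EqOn d (fun _ => ((0 : ℂ), (0 : ℂ))) (Icc x₀ b) := by
    apply ODE_solution_unique_of_mem_Icc_right (s := fun _ => univ) (fun t _ => hlip t)
      (hdc.mono (Icc_subset_Icc_left hx₀.1))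
      (fun t ht => hdw_Ici ⟨hx₀.1.trans ht.1, ht.2⟩ (hdD t ⟨hx₀.1.trans ht.1, ht.2.le⟩))
      (fun t _ => mem_univ _) continuousOn_const
      (fun t _ => by rw [hzero t]; exact hasDerivWithinAt_const _ _ _)
      (fun t _ => mem_univ _)
    simp [hd, h0, h0']
  have hleft : EqOn d (fun _ => ((0 : ℂ), (0 : ℂ))) (Icc a x₀) := by
    apply ODE_solution_unique_of_mem_Icc_left (s := fun _ => univ) (fun t _ => hlip t)
      (hdc.mono (Icc_subset_Icc_right hx₀.2))
      (fun t ht => hdw_Iic ⟨ht.1, ht.2.trans hx₀.2⟩ (hdD t ⟨ht.1.le, ht.2.trans hx₀.2⟩))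
      (fun t _ => mem_univ _) continuousOn_const
      (fun t _ => by rw [hzero t]; exact hasDerivWithinAt_const _ _ _)
      (fun t _ => mem_univ _)
    simp [hd, h0, h0']
  intro x hx
  have : d x = (0, 0) := by
    rcases le_total x x₀ with h | h
    · exact hleft ⟨hx.1, h⟩
    · exact hright ⟨h, hx.2⟩
  exact ⟨congrArg Prod.fst this, congrArg Prod.snd this⟩

lemma eig_im_ne_zero {a b : ℝ} (hab : a < b) {V : ℝ → ℝ} (hV : ContinuousOn V (Icc a b))
    {lam θ : ℝ} (hθ : Real.sin θ ≠ 0) {U U' U'' : ℝ → ℂ}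
    (h : IsEig1 a b V lam θ U U' U'') (hne : ∃ x ∈ Icc a b, U x ≠ 0) :
    ((starRingEnd ℂ) (U a) * U' a).im ≠ 0 := by
  obtain ⟨hU, hU', hode, hbb, hbb'⟩ := h
  obtain ⟨x₀, hx₀, hU0⟩ := hne
  have ha : a ∈ Icc a b := ⟨le_refl a, hab.le⟩
  have hbmem : b ∈ Icc a b := ⟨hab.le, le_refl b⟩
  set c : ℝ → ℂ := fun x => (V x : ℂ) - lam with hc
  have hUxx : ∀ x ∈ Icc a b, U'' x = c x * U x := by
    intro x hx
    have h1 := hode x hx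
    simp only [hc]
    linear_combination (-1 : ℂ) * h1
  obtain ⟨MV, hMV⟩ := (isCompact_Icc).exists_bound_of_continuousOn hV
  have hcM : ∀ x ∈ Icc a b, ‖c x‖ ≤ MV + |lam| := by
    intro x hx
    calc ‖(V x : ℂ) - (lam : ℂ)‖ ≤ ‖(V x : ℂ)‖ + ‖(lam : ℂ)‖ := norm_sub_le _ _
      _ ≤ MV + |lam| := by
          rw [Complex.norm_real, Complex.norm_real, Real.norm_eq_abs]
          exact add_le_add (by simpa [Real.norm_eq_abs] using hMV x hx) le_rfl
  intro him
  -- W is constant (= 0)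
  have hWd : ∀ x ∈ Icc a b,
      HasDerivWithinAt (fun y => ((starRingEnd ℂ) (U y) * U' y).im) 0 (Icc a b) x := by
    intro x hx
    have h1 : HasDerivWithinAt (fun y => (starRingEnd ℂ) (U y) * U' y)
        ((starRingEnd ℂ) (U' x) * U' x + (starRingEnd ℂ) (U x) * U'' x) (Icc a b) x := by
      have := ((hU x hx).star.mul (hU' x hx))
      exact this
    have h2 := Complex.imCLM.hasFDerivAt.comp_hasDerivWithinAt x h1
    refine h2.congr_deriv ?_
    rw [hUxx x hx]
    simp only [hc, Complex.imCLM_apply, Complex.add_im, Complex.mul_im, Complex.mul_re,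
      Complex.conj_re, Complex.conj_im, Complex.sub_re, Complex.sub_im, Complex.ofReal_re,
      Complex.ofReal_im]
    ring
  have hW0 : ∀ x ∈ Icc a b, ((starRingEnd ℂ) (U x) * U' x).im = 0 := by
    intro x hx
    have key := (convex_Icc a b).norm_image_sub_le_of_norm_hasDerivWithin_le
      (C := 0) (f' := fun _ => (0 : ℝ)) hWd (fun y _ => by simp) ha hx
    simp only [Real.norm_eq_abs, zero_mul] at key
    have h0 : ((starRingEnd ℂ) (U x) * U' x).im - ((starRingEnd ℂ) (U a) * U' a).im = 0 :=
      abs_eq_zero.mp (le_antisymm key (abs_nonneg _))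
    linarith [him]
  -- the conjugate-symmetry relation via ODE uniqueness
  set D : ℝ → ℂ := fun x => (starRingEnd ℂ) (U x₀) * U x - U x₀ * (starRingEnd ℂ) (U x) with hDdef
  set D' : ℝ → ℂ := fun x => (starRingEnd ℂ) (U x₀) * U' x - U x₀ * (starRingEnd ℂ) (U' x)
    with hD'def
  have hD : ∀ x ∈ Icc a b, HasDerivWithinAt D (D' x) (Icc a b) x := by
    intro x hx
    have := ((hU x hx).const_mul ((starRingEnd ℂ) (U x₀))).sub
      ((hU x hx).star.const_mul (U x₀))
    exact this
  have hD' : ∀ x ∈ Icc a b, HasDerivWithinAt D' (c x * D x) (Icc a b) x := by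
    intro x hx
    have h2 := ((hU' x hx).const_mul ((starRingEnd ℂ) (U x₀))).sub
      ((hU' x hx).star.const_mul (U x₀))
    have h3 : HasDerivWithinAt D'
        ((starRingEnd ℂ) (U x₀) * U'' x - U x₀ * (starRingEnd ℂ) (U'' x)) (Icc a b) x := by
      exact h2
    have hval : (starRingEnd ℂ) (U x₀) * U'' x - U x₀ * (starRingEnd ℂ) (U'' x) = c x * D x := by
      rw [hUxx x hx]
      simp only [hc, hDdef, map_mul, map_sub, Complex.conj_ofReal]
      ring
    rwa [hval] at h3
  have hDz : D x₀ = 0 := by simp only [hDdef]; ring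
  have hD'z : D' x₀ = 0 := by
    have hz : (starRingEnd ℂ) ((starRingEnd ℂ) (U x₀) * U' x₀) = (starRingEnd ℂ) (U x₀) * U' x₀ :=
      Complex.conj_eq_iff_im.mpr (hW0 x₀ hx₀)
    simp only [map_mul, Complex.conj_conj] at hz
    simp only [hD'def]
    rw [← hz]
    ring
  have key := ode_zero hcM hD hD' hx₀ hDz hD'z
  have E1 : ∀ x ∈ Icc a b, (starRingEnd ℂ) (U x₀) * U x = U x₀ * (starRingEnd ℂ) (U x) :=
    fun x hx => sub_eq_zero.mp (key x hx).1
  have E2 : ∀ x ∈ Icc a b, (starRingEnd ℂ) (U x₀) * U' x = U x₀ * (starRingEnd ℂ) (U' x) :=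
    fun x hx => sub_eq_zero.mp (key x hx).2
  set e := Complex.exp (θ * Complex.I) with he
  have hene : e - (starRingEnd ℂ) e ≠ 0 := by
    intro hh
    apply hθ
    have h4 : (starRingEnd ℂ) e = e := by linear_combination -hh
    have h5 : e.im = 0 := Complex.conj_eq_iff_im.mp h4
    rw [he, Complex.exp_ofReal_mul_I_im] at h5
    exact h5
  have hgen : ∀ (f : ℝ → ℂ), ((starRingEnd ℂ) (U x₀) * f a = U x₀ * (starRingEnd ℂ) (f a)) →
      ((starRingEnd ℂ) (U x₀) * f b = U x₀ * (starRingEnd ℂ) (f b)) →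
      (f b = e * f a) → f a = 0 := by
    intro f hfa hfb hfbc
    rw [hfbc, map_mul] at hfb
    have h6 : (starRingEnd ℂ) (U x₀) * f a * (e - (starRingEnd ℂ) e) = 0 := by
      linear_combination hfb - (starRingEnd ℂ) e * hfa
    rcases mul_eq_zero.mp h6 with h7 | h7
    · rcases mul_eq_zero.mp h7 with h8 | h8
      · exact absurd (by simpa using h8) hU0
      · exact h8
    · exact absurd h7 hene
  have hUa : U a = 0 := hgen U (E1 a ha) (E1 b hbmem) hbb
  have hU'a : U' a = 0 := hgen U' (E2 a ha) (E2 b hbmem) hbb'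
  have hfinal := ode_zero hcM hU
    (fun x hx => by have h9 := hU' x hx; rwa [hUxx x hx] at h9) ha hUa hU'a
  exact hU0 (hfinal x₀ hx₀).1

lemma lamderiv_formula {a b : ℝ} (hab : a < b) {V : ℝ → ℝ} {θ₁ θ₂ : ℝ}
    {lam lam' : ℝ → ℝ} {u ux uxx uθ uθx : ℝ → ℝ → ℂ}
    (hbr : IsBranch1 a b V θ₁ θ₂ lam lam' u ux uxx uθ uθx)
    {θ : ℝ} (hθ : θ ∈ Ioo θ₁ θ₂) :
    lam' θ * (∫ x in a..b, Complex.normSq (u θ x)) =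
      2 * ((starRingEnd ℂ) (u θ a) * ux θ a).im := by
  obtain ⟨hlam, heig, huθ, huθx, hcθ, hcθx⟩ := hbr
  set S := Ioo θ₁ θ₂ with hS
  have hSopen : IsOpen S := isOpen_Ioo
  have ha : a ∈ Icc a b := ⟨le_refl a, hab.le⟩
  have hbm : b ∈ Icc a b := ⟨hab.le, le_refl b⟩
  -- continuity in x
  have cU : ∀ η ∈ S, ContinuousOn (u η) (Icc a b) :=
    fun η hη x hx => ((heig η hη).1 x hx).continuousWithinAt
  have cUx : ∀ η ∈ S, ContinuousOn (ux η) (Icc a b) :=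
    fun η hη x hx => ((heig η hη).2.1 x hx).continuousWithinAt
  have hUxx : ∀ η ∈ S, ∀ x ∈ Icc a b, uxx η x = ((V x : ℂ) - lam η) * u η x := by
    intro η hη x hx
    have h1 := (heig η hη).2.2.1 x hx
    linear_combination (-1 : ℂ) * h1
  -- the main integral identity
  set Gf : ℝ → ℂ := fun η => ∫ x in a..b, u θ x * (starRingEnd ℂ) (u η x) with hGf
  set Bf : ℝ → ℂ := fun η =>
    (u θ b * (starRingEnd ℂ) (ux η b) - ux θ b * (starRingEnd ℂ) (u η b)) -
    (u θ a * (starRingEnd ℂ) (ux η a) - ux θ a * (starRingEnd ℂ) (u η a)) with hBf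
  have I1 : ∀ η ∈ S, ((lam θ : ℂ) - lam η) * Gf η = Bf η := by
    intro η hη
    set h : ℝ → ℂ := fun x =>
      u θ x * (starRingEnd ℂ) (ux η x) - ux θ x * (starRingEnd ℂ) (u η x) with hh
    set h' : ℝ → ℂ := fun x =>
      ((lam θ : ℂ) - lam η) * (u θ x * (starRingEnd ℂ) (u η x)) with hh'
    have hder : ∀ x ∈ Icc a b, HasDerivWithinAt h (h' x) (Icc a b) x := by
      intro x hx
      have H := (((heig θ hθ).1 x hx).mul ((heig η hη).2.1 x hx).star).sub
        ((((heig θ hθ).2.1 x hx)).mul (((heig η hη).1 x hx).star))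
      have hval : ux θ x * star (ux η x) + u θ x * star (uxx η x) -
          (uxx θ x * star (u η x) + ux θ x * star (ux η x)) = h' x := by
        simp only [Complex.star_def, hUxx θ hθ x hx, hUxx η hη x hx, hh', map_mul, map_sub,
          Complex.conj_ofReal]
        ring
      rw [hval] at H
      exact H
    have hcont : ContinuousOn h (Icc a b) := fun x hx => (hder x hx).continuousWithinAt
    have hint : IntervalIntegrable h' volume a b := by
      apply ContinuousOn.intervalIntegrable
      rw [uIcc_of_le hab.le]
      exact continuousOn_const.mul ((cU θ hθ).mul (continuous_star.comp_continuousOn (cU η hη)))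
    have hFTC := intervalIntegral.integral_eq_sub_of_hasDeriv_right_of_le hab.le hcont
      (fun x hx => hdw_Ioi hx (hder x ⟨hx.1.le, hx.2.le⟩)) hint
    have hconst : (∫ x in a..b, h' x) = ((lam θ : ℂ) - lam η) * Gf η := by
      simp only [hh', hGf]
      exact intervalIntegral.integral_const_mul _ _
    rw [hconst] at hFTC
    rw [hFTC]
  set e := Complex.exp (θ * Complex.I) with he
  have he1 : e * (starRingEnd ℂ) e = 1 := by
    rw [Complex.mul_conj, Complex.normSq_eq_norm_sq, he, Complex.norm_exp_ofReal_mul_I]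
    norm_num
  -- boundary conditions and their θ-derivatives
  have bcθ : u θ b = e * u θ a := (heig θ hθ).2.2.2.1
  have bc'θ : ux θ b = e * ux θ a := (heig θ hθ).2.2.2.2
  have hexp : HasDerivAt (fun η : ℝ => Complex.exp (↑η * Complex.I)) (e * Complex.I) θ := by
    have h1 : HasDerivAt (fun η : ℝ => (↑η * Complex.I : ℂ)) Complex.I θ := by
      simpa using ((hasDerivAt_id θ).ofReal_comp).mul_const Complex.I
    simpa [he] using h1.cexp
  have hbcd : ∀ (f : ℝ → ℝ → ℂ) (fθ : ℝ → ℝ → ℂ),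
      (∀ η ∈ S, ∀ x ∈ Icc a b, HasDerivWithinAt (fun t => f t x) (fθ η x) S η) →
      (∀ η ∈ S, f η b = Complex.exp (↑η * Complex.I) * f η a) →
      fθ θ b = e * Complex.I * f θ a + e * fθ θ a := by
    intro f fθ hd hbc
    have h2 : HasDerivWithinAt (fun η => Complex.exp (↑η * Complex.I) * f η a)
        (e * Complex.I * f θ a + e * fθ θ a) S θ := by
      have := hexp.hasDerivWithinAt.mul (hd θ hθ a ha)
      exact this
    have h3 : HasDerivWithinAt (fun η => f η b) (e * Complex.I * f θ a + e * fθ θ a) S θ :=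
      h2.congr (fun η hη => hbc η hη) (hbc θ hθ)
    have h4 := (h3.hasDerivAt (hSopen.mem_nhds hθ)).unique
      ((hd θ hθ b hbm).hasDerivAt (hSopen.mem_nhds hθ))
    exact h4.symm
  have huθb : uθ θ b = e * Complex.I * u θ a + e * uθ θ a :=
    hbcd u uθ huθ (fun η hη => (heig η hη).2.2.2.1)
  have huθxb : uθx θ b = e * Complex.I * ux θ a + e * uθx θ a :=
    hbcd ux uθx huθx (fun η hη => (heig η hη).2.2.2.2)
  -- derivative of Bf at θ
  set B'val : ℂ :=
    (u θ b * (starRingEnd ℂ) (uθx θ b) - ux θ b * (starRingEnd ℂ) (uθ θ b)) -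
    (u θ a * (starRingEnd ℂ) (uθx θ a) - ux θ a * (starRingEnd ℂ) (uθ θ a)) with hB'val
  have hBd : HasDerivWithinAt Bf B'val S θ := by
    have h5 := (((huθx θ hθ b hbm).star.const_mul (u θ b)).sub
        ((huθ θ hθ b hbm).star.const_mul (ux θ b))).sub
      (((huθx θ hθ a ha).star.const_mul (u θ a)).sub
        ((huθ θ hθ a ha).star.const_mul (ux θ a)))
    exact h5
  have hBθ : Bf θ = 0 := by
    simp only [hBf, bcθ, bc'θ, map_mul]
    linear_combination (u θ a * (starRingEnd ℂ) (ux θ a) -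
      ux θ a * (starRingEnd ℂ) (u θ a)) * he1
  -- the value of -B'val
  set z : ℂ := (starRingEnd ℂ) (u θ a) * ux θ a with hz
  have hzc : (starRingEnd ℂ) z = u θ a * (starRingEnd ℂ) (ux θ a) := by
    simp [hz, map_mul]
  have hBval2 : B'val = Complex.I * (z - (starRingEnd ℂ) z) := by
    simp only [hB'val, bcθ, bc'θ, huθb, huθxb, map_add, map_mul, Complex.conj_I, hz, hzc, map_mul, Complex.conj_conj]
    linear_combination (-(Complex.I * u θ a * (starRingEnd ℂ) (ux θ a)) +
      u θ a * (starRingEnd ℂ) (uθx θ a) + Complex.I * ux θ a * (starRingEnd ℂ) (u θ a) -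
      ux θ a * (starRingEnd ℂ) (uθ θ a)) * he1
  have hBval3 : -B'val = ((2 * z.im : ℝ) : ℂ) := by
    rw [hBval2, Complex.sub_conj]
    linear_combination (-((2 * z.im : ℝ) : ℂ)) * Complex.I_mul_I
  -- the filter of approach
  set l := 𝓝[S \ {θ}] θ with hl
  have hlle : l ≤ 𝓝[S] θ := nhdsWithin_mono θ diff_subset
  have hlmem : S \ {θ} ∈ l := self_mem_nhdsWithin
  have hlpunct : l = 𝓝[{θ}ᶜ] θ := by
    rw [hl, diff_eq]
    exact nhdsWithin_inter_of_mem (mem_nhdsWithin_of_mem_nhds (hSopen.mem_nhds hθ))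
  haveI hlne : l.NeBot := by rw [hlpunct]; infer_instance
  haveI hlcg : l.IsCountablyGenerated := by rw [hl]; infer_instance
  -- uniform bound on u near θ
  obtain ⟨ε, hε, hball⟩ := Metric.isOpen_iff.mp hSopen θ hθ
  set δ := ε / 2 with hδ
  have hδpos : 0 < δ := by positivity
  have hIccS : Icc (θ - δ) (θ + δ) ⊆ S := by
    intro t ht
    apply hball
    rw [Metric.mem_ball, Real.dist_eq]
    have h8 : |t - θ| ≤ δ := abs_le.mpr ⟨by linarith [ht.1], by linarith [ht.2]⟩
    linarith
  have hθmem : θ ∈ Icc (θ - δ) (θ + δ) := ⟨by linarith, by linarith⟩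
  obtain ⟨M, hM⟩ := (isCompact_Icc.prod isCompact_Icc).exists_bound_of_continuousOn
    (hcθ.mono (prod_mono hIccS Subset.rfl))
  have hM0 : 0 ≤ M := le_trans (norm_nonneg _) (hM (θ, a) ⟨hθmem, ha⟩)
  obtain ⟨C₀, hC₀⟩ := isCompact_Icc.exists_bound_of_continuousOn (cU θ hθ)
  have hC₀0 : 0 ≤ C₀ := le_trans (norm_nonneg _) (hC₀ a ha)
  have hbnd : ∀ η ∈ Icc (θ - δ) (θ + δ), ∀ x ∈ Icc a b, ‖u η x‖ ≤ C₀ + M * δ := by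
    intro η hη x hx
    have hkey := (convex_Icc (θ - δ) (θ + δ)).norm_image_sub_le_of_norm_hasDerivWithin_le
      (f := fun t => u t x) (f' := fun t => uθ t x)
      (fun t ht => (huθ t (hIccS ht) x hx).mono hIccS)
      (fun t ht => hM (t, x) ⟨ht, hx⟩) hθmem hη
    have h7 : ‖η - θ‖ ≤ δ := by
      rw [Real.norm_eq_abs]
      exact abs_le.mpr ⟨by linarith [hη.1], by linarith [hη.2]⟩
    calc ‖u η x‖ ≤ ‖u θ x‖ + ‖u η x - u θ x‖ := norm_le_insert' _ _
      _ ≤ C₀ + M * δ := add_le_add (hC₀ x hx)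
          (hkey.trans (mul_le_mul_of_nonneg_left h7 hM0))
  -- continuity of Gf at θ along l
  have hGlim : Tendsto Gf l (𝓝 (Gf θ)) := by
    rw [hGf]
    apply intervalIntegral.tendsto_integral_filter_of_dominated_convergence
      (bound := fun _ => C₀ * (C₀ + M * δ))
    · filter_upwards [hlmem] with η hη
      have h9 : ContinuousOn (fun x => u θ x * (starRingEnd ℂ) (u η x)) (Icc a b) :=
        (cU θ hθ).mul (continuous_star.comp_continuousOn (cU η hη.1))
      exact (h9.mono (by rw [uIoc_of_le hab.le]; exact Ioc_subset_Icc_self)).aestronglyMeasurable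
        measurableSet_uIoc
    · have hIccl : Icc (θ - δ) (θ + δ) ∈ l :=
        mem_nhdsWithin_of_mem_nhds (Icc_mem_nhds (by linarith) (by linarith))
      filter_upwards [hIccl] with η hη
      apply ae_of_all
      intro x hx
      have hx' : x ∈ Icc a b := by
        rw [uIoc_of_le hab.le] at hx; exact Ioc_subset_Icc_self hx
      rw [norm_mul, RCLike.norm_conj]
      exact mul_le_mul (hC₀ x hx') (hbnd η hη x hx') (norm_nonneg _) hC₀0
    · exact intervalIntegrable_const
    · apply ae_of_all
      intro x hx
      have hx' : x ∈ Icc a b := by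
        rw [uIoc_of_le hab.le] at hx; exact Ioc_subset_Icc_self hx
      have h1 : Tendsto (fun η => u η x) l (𝓝 (u θ x)) :=
        ((huθ θ hθ x hx').continuousWithinAt).mono_left hlle
      exact ((continuous_star.tendsto _).comp h1).const_mul (u θ x)
  -- slopes
  have hslopeLam : Tendsto (slope lam θ) l (𝓝 (lam' θ)) :=
    hasDerivWithinAt_iff_tendsto_slope.mp (hlam θ hθ)
  have hslopeB : Tendsto (slope Bf θ) l (𝓝 B'val) :=
    hasDerivWithinAt_iff_tendsto_slope.mp hBd
  have hprod : Tendsto (fun η => ((slope lam θ η : ℝ) : ℂ) * Gf η) l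
      (𝓝 ((lam' θ : ℂ) * Gf θ)) :=
    ((Complex.continuous_ofReal.tendsto _).comp hslopeLam).mul hGlim
  have hEq : ∀ᶠ η in l, ((slope lam θ η : ℝ) : ℂ) * Gf η = -(slope Bf θ η) := by
    filter_upwards [hlmem] with η hη
    have hne : η ≠ θ := fun hcon => hη.2 (by simp [hcon])
    have hI1 := I1 η hη.1
    have hne' : ((η : ℂ) - (θ : ℂ)) ≠ 0 := by
      rw [sub_ne_zero]
      exact_mod_cast hne
    rw [slope_def_field, slope_def_module, hBθ, sub_zero, Complex.real_smul]
    push_cast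
    field_simp [hne']
    linear_combination -hI1
  have hfin : (lam' θ : ℂ) * Gf θ = -B'val :=
    tendsto_nhds_unique (hprod.congr' hEq) hslopeB.neg
  have hGθ : Gf θ = ((∫ x in a..b, Complex.normSq (u θ x) : ℝ) : ℂ) := by
    rw [hGf, ← intervalIntegral.integral_ofReal]
    apply intervalIntegral.integral_congr
    intro x _
    exact Complex.mul_conj _
  rw [hGθ, hBval3] at hfin
  exact_mod_cast hfin

lemma integral_normSq_pos {a b : ℝ} (hab : a < b) {U : ℝ → ℂ}
    (hc : ContinuousOn U (Icc a b)) {x₀ : ℝ} (hx₀ : x₀ ∈ Icc a b) (h0 : U x₀ ≠ 0) :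
    0 < ∫ x in a..b, Complex.normSq (U x) := by
  set f : ℝ → ℝ := fun x => Complex.normSq (U x) with hf
  have hfc : ContinuousOn f (Icc a b) := Complex.continuous_normSq.comp_continuousOn hc
  have hfnn : ∀ x ∈ Icc a b, 0 ≤ f x := fun x _ => Complex.normSq_nonneg _
  have hfi : IntervalIntegrable f volume a b := by
    apply ContinuousOn.intervalIntegrable
    rwa [uIcc_of_le hab.le]
  have hx₀pos : 0 < f x₀ := Complex.normSq_pos.mpr h0
  -- find an interior point where f is positive
  have hev : ∀ᶠ y in 𝓝[Icc a b] x₀, 0 < f y :=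
    (hfc x₀ hx₀) (Ioi_mem_nhds hx₀pos)
  obtain ⟨N, hNopen, hx₀N, hNsub⟩ := mem_nhdsWithin.mp hev
  have hclos : x₀ ∈ closure (Ioo a b) := by
    rw [closure_Ioo hab.ne]
    exact hx₀
  obtain ⟨x₁, hx₁N, hx₁Ioo⟩ := _root_.mem_closure_iff.mp hclos N hNopen hx₀N
  have hx₁pos : 0 < f x₁ := hNsub ⟨hx₁N, Ioo_subset_Icc_self hx₁Ioo⟩
  have hcx₁ : ContinuousAt f x₁ :=
    (hfc x₁ (Ioo_subset_Icc_self hx₁Ioo)).continuousAt (Icc_mem_nhds hx₁Ioo.1 hx₁Ioo.2)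
  have hev2 : (f ⁻¹' Ioi 0) ∩ Ioo a b ∈ 𝓝 x₁ :=
    inter_mem (hcx₁ (Ioi_mem_nhds hx₁pos)) (isOpen_Ioo.mem_nhds hx₁Ioo)
  obtain ⟨r, hr, hball⟩ := Metric.mem_nhds_iff.mp hev2
  obtain ⟨c, d, hcd, hIccball⟩ : ∃ c d, c < d ∧ Icc c d ⊆ Metric.ball x₁ r :=
    ⟨x₁ - r / 2, x₁ + r / 2, by linarith, by
      intro y hy
      rw [Metric.mem_ball, Real.dist_eq]
      have h9 : |y - x₁| ≤ r / 2 := abs_le.mpr ⟨by linarith [hy.1], by linarith [hy.2]⟩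
      linarith⟩
  have hsubIoo : Icc c d ⊆ Ioo a b := fun y hy => (hball (hIccball hy)).2
  have hac : a ≤ c := (hsubIoo ⟨le_refl c, hcd.le⟩).1.le
  have hdb : d ≤ b := (hsubIoo ⟨hcd.le, le_refl d⟩).2.le
  have hsub1 : ∀ {p q : ℝ}, a ≤ p → p ≤ q → q ≤ b → IntervalIntegrable f volume p q := by
    intro p q hp hpq hq
    apply hfi.mono_set
    rw [uIcc_of_le hab.le, uIcc_of_le hpq]
    exact Icc_subset_Icc hp hq
  have hi1 : IntervalIntegrable f volume a c := hsub1 le_rfl hac (hdb.trans' hcd.le)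
  have hi2 : IntervalIntegrable f volume c d := hsub1 hac hcd.le hdb
  have hi3 : IntervalIntegrable f volume d b := hsub1 (hac.trans hcd.le) hdb le_rfl
  have hdecomp : (∫ x in a..b, f x) =
      (∫ x in a..c, f x) + ((∫ x in c..d, f x) + (∫ x in d..b, f x)) := by
    rw [intervalIntegral.integral_add_adjacent_intervals hi2 hi3,
      intervalIntegral.integral_add_adjacent_intervals hi1 (hi2.trans hi3)]
  have hpos2 : 0 < ∫ x in c..d, f x :=
    intervalIntegral.intervalIntegral_pos_of_pos_on hi2
      (fun x hx => hball (hIccball (Ioo_subset_Icc_self hx)) |>.1) hcd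
  have hnn1 : 0 ≤ ∫ x in a..c, f x :=
    intervalIntegral.integral_nonneg hac
      (fun x hx => hfnn x ⟨hx.1, hx.2.trans (hcd.le.trans hdb)⟩)
  have hnn3 : 0 ≤ ∫ x in d..b, f x :=
    intervalIntegral.integral_nonneg hdb
      (fun x hx => hfnn x ⟨(hac.trans hcd.le).trans hx.1, hx.2⟩)
  rw [hdecomp]
  linarith

end Aux

/-- for a continuous scalar potential (`n = 1`), if `(θ₁,θ₂) ⊆ (0,π)` or
`(θ₁,θ₂) ⊆ (π,2π)` and `(lam, u)` is a C¹ eigenvalue branch on `(θ₁,θ₂)` with `u(θ,·)`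
not identically zero for each `θ`, then `lam` is strictly monotone on `(θ₁,θ₂)`. -/
theorem scalar_eigenvalue_strictly_monotone (a b : ℝ) (hab : a < b)
    (V : ℝ → ℝ) (hVcont : ContinuousOn V (Icc a b))
    (θ₁ θ₂ : ℝ) (h12 : θ₁ < θ₂)
    (hsub : Ioo θ₁ θ₂ ⊆ Ioo (0 : ℝ) Real.pi ∨ Ioo θ₁ θ₂ ⊆ Ioo Real.pi (2 * Real.pi))
    (lam lam' : ℝ → ℝ) (u ux uxx uθ uθx : ℝ → ℝ → ℂ)
    (hbranch : IsBranch1 a b V θ₁ θ₂ lam lam' u ux uxx uθ uθx)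
    (hne : ∀ θ ∈ Ioo θ₁ θ₂, ∃ x ∈ Icc a b, u θ x ≠ 0) :
    StrictMonoOn lam (Ioo θ₁ θ₂) ∨ StrictAntiOn lam (Ioo θ₁ θ₂) := by
  have hsin : ∀ θ ∈ Ioo θ₁ θ₂, Real.sin θ ≠ 0 := by
    rcases hsub with h | h
    · exact fun θ hθ => ne_of_gt (Real.sin_pos_of_pos_of_lt_pi (h hθ).1 (h hθ).2)
    · intro θ hθ
      have h1 := (h hθ).1
      have h2 := (h hθ).2
      have h3 : 0 < Real.sin (θ - Real.pi) :=
        Real.sin_pos_of_pos_of_lt_pi (by linarith) (by linarith)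
      have h4 : Real.sin (θ - Real.pi) = -Real.sin θ := by
        rw [Real.sin_sub, Real.sin_pi, Real.cos_pi]; ring
      intro h5
      rw [h4, h5] at h3
      simp at h3
  have hder : ∀ θ ∈ Ioo θ₁ θ₂, lam' θ ≠ 0 := by
    intro θ hθ
    have hformula := lamderiv_formula hab hbranch hθ
    have hipos : 0 < ∫ x in a..b, Complex.normSq (u θ x) := by
      obtain ⟨x₀, hx₀, h0⟩ := hne θ hθ
      exact integral_normSq_pos hab
        (fun x hx => ((hbranch.2.1 θ hθ).1 x hx).continuousWithinAt) hx₀ h0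
    have him := eig_im_ne_zero hab hVcont (hsin θ hθ) (hbranch.2.1 θ hθ) (hne θ hθ)
    intro hzero
    rw [hzero, zero_mul] at hformula
    exact him (by linarith)
  have hdw : ∀ θ ∈ Ioo θ₁ θ₂, HasDerivWithinAt lam (lam' θ) (Ioo θ₁ θ₂) θ := hbranch.1
  have hOC : OrdConnected (lam' '' Ioo θ₁ θ₂) := by
    have h6 : ∀ θ ∈ Ioo θ₁ θ₂, HasDerivWithinAt lam (lam' θ) (Ioo θ₁ θ₂) θ := hdw
    exact Set.ordConnected_Ioo.image_hasDerivWithinAt h6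
  have hcont : ContinuousOn lam (Ioo θ₁ θ₂) := fun θ hθ => (hdw θ hθ).continuousWithinAt
  have hderiv_eq : ∀ θ ∈ Ioo θ₁ θ₂, deriv lam θ = lam' θ := fun θ hθ =>
    ((hdw θ hθ).hasDerivAt (isOpen_Ioo.mem_nhds hθ)).deriv
  by_cases hpos : ∀ θ ∈ Ioo θ₁ θ₂, 0 < lam' θ
  · left
    apply strictMonoOn_of_deriv_pos (convex_Ioo θ₁ θ₂) hcont
    intro θ hθ
    rw [interior_Ioo] at hθ
    rw [hderiv_eq θ hθ]
    exact hpos θ hθ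
  · right
    push_neg at hpos
    obtain ⟨θ₀, hθ₀, hle⟩ := hpos
    have h2 : lam' θ₀ < 0 := lt_of_le_of_ne hle (hder θ₀ hθ₀)
    have hneg : ∀ θ ∈ Ioo θ₁ θ₂, lam' θ < 0 := by
      intro θ hθ
      rcases lt_or_ge (lam' θ) 0 with h | h
      · exact h
      have h1 : 0 < lam' θ := lt_of_le_of_ne h (Ne.symm (hder θ hθ))
      have h3 : (0 : ℝ) ∈ Icc (lam' θ₀) (lam' θ) := ⟨h2.le, h1.le⟩
      obtain ⟨θ', hθ', hval⟩ := hOC.out ⟨θ₀, hθ₀, rfl⟩ ⟨θ, hθ, rfl⟩ h3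
      exact absurd hval (hder θ' hθ')
    apply strictAntiOn_of_deriv_neg (convex_Ioo θ₁ θ₂) hcont
    intro θ hθ
    rw [interior_Ioo] at hθ
    rw [hderiv_eq θ hθ]
    exact hneg θ hθ
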